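/- For n ≥ 2k and k ≥ 4, the maximum of m(n,P) over all k×k permutation matrices P equals n² − 4k + 8. -/

import Mathlib

open Finset

/-- Number of 1-entries of a (0,1)-matrix. -/
def onesCount {m n : ℕ} (A : Fin m → Fin n → Bool) : ℕ :=
  (Finset.univ.filter (fun p : Fin m × Fin n => A p.1 p.2 = true)).card

/-- Number of 0-entries of a (0,1)-matrix. -/
def zerosCount {m n : ℕ} (A : Fin m → Fin n → Bool) : ℕ :=
  (Finset.univ.filter (fun p : Fin m × Fin n => A p.1 p.2 = false)).card

/-- `A` is `Q`-forcing: every s×t submatrix of `A` is entrywise ≥ Q. -/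
def IsForcing {m n s t : ℕ} (A : Fin m → Fin n → Bool) (Q : Fin s → Fin t → Bool) : Prop :=
  ∀ (r : Fin s → Fin m) (c : Fin t → Fin n), StrictMono r → StrictMono c →
    ∀ y x, Q y x = true → A (r y) (c x) = true

/-- Minimum number of 1-entries of an m×n Q-forcing matrix. -/
noncomputable def mMin (m n : ℕ) {s t : ℕ} (Q : Fin s → Fin t → Bool) : ℕ :=
  sInf {v | ∃ A : Fin m → Fin n → Bool, IsForcing A Q ∧ onesCount A = v}

/-- `A` is strongly `Q`-forcing: every 1-entry lies in a submatrix exactly equal to `Q`. -/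
def IsStronglyForcing {m n s t : ℕ} (A : Fin m → Fin n → Bool)
    (Q : Fin s → Fin t → Bool) : Prop :=
  ∀ i j, A i j = true → ∃ (r : Fin s → Fin m) (c : Fin t → Fin n),
    StrictMono r ∧ StrictMono c ∧ (∀ y x, A (r y) (c x) = Q y x) ∧
    ∃ y x, r y = i ∧ c x = j

/-- Maximum number of 1-entries of an m×n strongly Q-forcing matrix. -/
noncomputable def MMax (m n : ℕ) {s t : ℕ} (Q : Fin s → Fin t → Bool) : ℕ :=
  sSup {v | ∃ A : Fin m → Fin n → Bool, IsStronglyForcing A Q ∧ onesCount A = v}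

/-- Corner sets of 0-positions with no 1-entry weakly in the given quadrant direction. -/
def cornerNW {s t : ℕ} (Q : Fin s → Fin t → Bool) : Finset (Fin s × Fin t) :=
  Finset.univ.filter (fun p => ∀ i' j', i' ≤ p.1 → j' ≤ p.2 → Q i' j' = false)

def cornerNE {s t : ℕ} (Q : Fin s → Fin t → Bool) : Finset (Fin s × Fin t) :=
  Finset.univ.filter (fun p => ∀ i' j', i' ≤ p.1 → p.2 ≤ j' → Q i' j' = false)

def cornerSW {s t : ℕ} (Q : Fin s → Fin t → Bool) : Finset (Fin s × Fin t) :=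
  Finset.univ.filter (fun p => ∀ i' j', p.1 ≤ i' → j' ≤ p.2 → Q i' j' = false)

def cornerSE {s t : ℕ} (Q : Fin s → Fin t → Bool) : Finset (Fin s × Fin t) :=
  Finset.univ.filter (fun p => ∀ i' j', p.1 ≤ i' → p.2 ≤ j' → Q i' j' = false)

/-- `P` is a permutation matrix. -/
def IsPermMatrix {k : ℕ} (P : Fin k → Fin k → Bool) : Prop :=
  ∃ σ : Equiv.Perm (Fin k), ∀ i j, P i j = decide (σ i = j)

section Aux

open Finset

variable {k n : ℕ}

lemma sm_le {r : Fin k → Fin n} (hr : StrictMono r) (y : Fin k) :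
    (y : ℕ) ≤ (r y : ℕ) := by
  have : ∀ m : ℕ, ∀ y : Fin k, (y : ℕ) = m → (y:ℕ) ≤ (r y : ℕ) := by
    intro m
    induction m with
    | zero => intro y h; omega
    | succ i ih =>
      intro y h
      have hik : i < k := by have := y.isLt; omega
      have hval : ((⟨i, hik⟩ : Fin k) : ℕ) = i := rfl
      have hy' : (⟨i, hik⟩ : Fin k) < y := by rw [Fin.lt_def, hval]; omega
      have h1 : (r ⟨i, hik⟩ : ℕ) < (r y : ℕ) := Fin.lt_def.mp (hr hy')
      have h2 := ih ⟨i, hik⟩ hval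
      omega
  exact this _ y rfl

lemma sm_ub {r : Fin k → Fin n} (hr : StrictMono r) (hkn : k ≤ n) (y : Fin k) :
    (r y : ℕ) ≤ n - k + (y : ℕ) := by
  have hrev : StrictMono (fun t : Fin k => (r t.rev).rev) := by
    intro a b hab
    simp only [Fin.rev_lt_rev]
    exact hr (by simpa [Fin.rev_lt_rev] using hab)
  have h := sm_le hrev y.rev
  rw [Fin.rev_rev] at h
  have hy := y.isLt
  have hry := (r y).isLt
  simp only [Fin.val_rev] at h
  omega

lemma exists_embed (hkn : k ≤ n) (y : Fin k) (a : Fin n)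
    (h1 : (y:ℕ) ≤ a) (h2 : (a:ℕ) ≤ n - k + y) :
    ∃ r : Fin k → Fin n, StrictMono r ∧ r y = a := by
  have hy := y.isLt
  refine ⟨fun t => ⟨(a:ℕ) - y + t, by have := t.isLt; omega⟩, ?_, ?_⟩
  · intro s t hst
    rw [Fin.lt_def] at hst ⊢
    simp only
    omega
  · apply Fin.ext
    simp only
    omega

lemma forced_zero {A : Fin n → Fin n → Bool} {P : Fin k → Fin k → Bool}
    (hF : IsForcing A P) (hkn : k ≤ n) {a b : Fin n} (hz : A a b = false)
    {y x : Fin k} (hy1 : (y:ℕ) ≤ a) (hy2 : (a:ℕ) ≤ n - k + y)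
    (hx1 : (x:ℕ) ≤ b) (hx2 : (b:ℕ) ≤ n - k + x) : P y x = false := by
  by_contra h
  rw [Bool.not_eq_false] at h
  obtain ⟨r, hr, hra⟩ := exists_embed hkn y a hy1 hy2
  obtain ⟨c, hc, hcb⟩ := exists_embed hkn x b hx1 hx2
  have := hF r c hr hc y x h
  rw [hra, hcb, hz] at this
  exact Bool.false_ne_true this

end Aux
section Aux2

open Finset

variable {k n : ℕ}

lemma feasible_col (hk : 0 < k) (hkn : k ≤ n) (b : Fin n) :
    ∃ x : Fin k, (x:ℕ) ≤ b ∧ (b:ℕ) ≤ n - k + x := by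
  by_cases hb : (b:ℕ) < k
  · exact ⟨⟨(b:ℕ), hb⟩, Nat.le_refl _,
      show (b:ℕ) ≤ n - k + (b:ℕ) by omega⟩
  · exact ⟨⟨k-1, by omega⟩, show (k-1:ℕ) ≤ (b:ℕ) by omega,
      show (b:ℕ) ≤ n - k + (k-1) by have := b.isLt; omega⟩

lemma zero_region {A : Fin n → Fin n → Bool} {P : Fin k → Fin k → Bool}
    {σ : Equiv.Perm (Fin k)} (hσ : ∀ i j, P i j = decide (σ i = j))
    (hF : IsForcing A P) (hk : 0 < k) (hkn : 2 * k ≤ n)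
    {a b : Fin n} (hz : A a b = false) :
    ((a:ℕ) < k ∨ n - k ≤ (a:ℕ)) ∧ ((b:ℕ) < k ∨ n - k ≤ (b:ℕ)) := by
  have hkn' : k ≤ n := by omega
  constructor
  · by_contra hmid
    push_neg at hmid
    obtain ⟨h1, h2⟩ := hmid
    obtain ⟨x, hx1, hx2⟩ := feasible_col hk hkn' b
    have hy := (σ.symm x).isLt
    have hPyx : P (σ.symm x) x = true := by rw [hσ]; simp
    have := forced_zero hF hkn' hz (y := σ.symm x) (x := x)
      (by omega) (by omega) hx1 hx2
    rw [hPyx] at this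
    exact Bool.noConfusion this
  · by_contra hmid
    push_neg at hmid
    obtain ⟨h1, h2⟩ := hmid
    obtain ⟨y, hy1, hy2⟩ := feasible_col hk hkn' a
    have hx := (σ y).isLt
    have hPyx : P y (σ y) = true := by rw [hσ]; simp
    have := forced_zero hF hkn' hz (y := y) (x := σ y)
      hy1 hy2 (by omega) (by omega)
    rw [hPyx] at this
    exact Bool.noConfusion this

end Aux2
section Aux3

open Finset

variable {k n : ℕ}

lemma zeros_le {A : Fin n → Fin n → Bool} {P : Fin k → Fin k → Bool}
    (hP : IsPermMatrix P) (hF : IsForcing A P) (hk : 0 < k) (hkn : 2 * k ≤ n) :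
    zerosCount A ≤ (cornerNW P).card + (cornerNE P).card
      + (cornerSW P).card + (cornerSE P).card := by
  classical
  obtain ⟨σ, hσ⟩ := hP
  have hkn' : k ≤ n := by omega
  have hknk : k ≤ n - k := by omega
  set Z : Finset (Fin n × Fin n) := univ.filter (fun p => A p.1 p.2 = false) with hZdef
  have hZmem : ∀ p ∈ Z, A p.1 p.2 = false := by
    intro p hp; simpa [hZdef] using hp
  have hsub : Z ⊆ ((Z.filter fun p => (p.1:ℕ) < k ∧ (p.2:ℕ) < k) ∪
      (Z.filter fun p => (p.1:ℕ) < k ∧ n - k ≤ (p.2:ℕ))) ∪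
      ((Z.filter fun p => n - k ≤ (p.1:ℕ) ∧ (p.2:ℕ) < k) ∪
      (Z.filter fun p => n - k ≤ (p.1:ℕ) ∧ n - k ≤ (p.2:ℕ))) := by
    intro p hp
    obtain ⟨ha, hb⟩ := zero_region hσ hF hk hkn (hZmem p hp)
    simp only [mem_union, mem_filter]
    rcases ha with ha | ha <;> rcases hb with hb | hb
    · exact Or.inl (Or.inl ⟨hp, ha, hb⟩)
    · exact Or.inl (Or.inr ⟨hp, ha, hb⟩)
    · exact Or.inr (Or.inl ⟨hp, ha, hb⟩)
    · exact Or.inr (Or.inr ⟨hp, ha, hb⟩)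
  have hNW : (Z.filter fun p => (p.1:ℕ) < k ∧ (p.2:ℕ) < k).card ≤ (cornerNW P).card := by
    apply card_le_card_of_injOn
      (fun p => ((⟨(p.1:ℕ) % k, Nat.mod_lt _ hk⟩ : Fin k), (⟨(p.2:ℕ) % k, Nat.mod_lt _ hk⟩ : Fin k)))
    · intro p hp
      simp only [mem_coe, mem_filter] at hp
      obtain ⟨hpZ, ha, hb⟩ := hp
      simp only [mem_coe, cornerNW, mem_filter, mem_univ, true_and]
      intro i' j' hi hj
      simp only [Fin.le_def, Fin.val_mk] at hi hj
      have hma := Nat.mod_eq_of_lt ha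
      have hmb := Nat.mod_eq_of_lt hb
      have hik := i'.isLt
      have hjk := j'.isLt
      exact forced_zero hF hkn' (hZmem p hpZ) (by omega) (by omega) (by omega) (by omega)
    · intro p hp q hq hfq
      simp only [mem_coe, mem_filter] at hp hq
      simp only [Prod.mk.injEq, Fin.mk.injEq] at hfq
      have := Nat.mod_eq_of_lt hp.2.1
      have := Nat.mod_eq_of_lt hp.2.2
      have := Nat.mod_eq_of_lt hq.2.1
      have := Nat.mod_eq_of_lt hq.2.2
      have h1 : (p.1:ℕ) = q.1 := by omega
      have h2 : (p.2:ℕ) = q.2 := by omega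
      exact Prod.ext (Fin.ext h1) (Fin.ext h2)
  have hNE : (Z.filter fun p => (p.1:ℕ) < k ∧ n - k ≤ (p.2:ℕ)).card ≤ (cornerNE P).card := by
    apply card_le_card_of_injOn
      (fun p => ((⟨(p.1:ℕ) % k, Nat.mod_lt _ hk⟩ : Fin k),
        (⟨((p.2:ℕ) - (n-k)) % k, Nat.mod_lt _ hk⟩ : Fin k)))
    · intro p hp
      simp only [mem_coe, mem_filter] at hp
      obtain ⟨hpZ, ha, hb⟩ := hp
      simp only [mem_coe, cornerNE, mem_filter, mem_univ, true_and]
      intro i' j' hi hj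
      simp only [Fin.le_def, Fin.val_mk] at hi hj
      have hma := Nat.mod_eq_of_lt ha
      have hb2 := (p.2).isLt
      have hmb : ((p.2:ℕ) - (n-k)) % k = (p.2:ℕ) - (n-k) := Nat.mod_eq_of_lt (by omega)
      have hik := i'.isLt
      have hjk := j'.isLt
      exact forced_zero hF hkn' (hZmem p hpZ) (by omega) (by omega) (by omega) (by omega)
    · intro p hp q hq hfq
      simp only [mem_coe, mem_filter] at hp hq
      simp only [Prod.mk.injEq, Fin.mk.injEq] at hfq
      have := Nat.mod_eq_of_lt hp.2.1
      have := Nat.mod_eq_of_lt hq.2.1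
      have hbp := (p.2).isLt
      have hbq := (q.2).isLt
      have : ((p.2:ℕ) - (n-k)) % k = (p.2:ℕ) - (n-k) := Nat.mod_eq_of_lt (by omega)
      have : ((q.2:ℕ) - (n-k)) % k = (q.2:ℕ) - (n-k) := Nat.mod_eq_of_lt (by omega)
      have h1 : (p.1:ℕ) = q.1 := by omega
      have h2 : (p.2:ℕ) = q.2 := by
        have := hp.2.2; have := hq.2.2; omega
      exact Prod.ext (Fin.ext h1) (Fin.ext h2)
  have hSW : (Z.filter fun p => n - k ≤ (p.1:ℕ) ∧ (p.2:ℕ) < k).card ≤ (cornerSW P).card := by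
    apply card_le_card_of_injOn
      (fun p => ((⟨((p.1:ℕ) - (n-k)) % k, Nat.mod_lt _ hk⟩ : Fin k),
        (⟨(p.2:ℕ) % k, Nat.mod_lt _ hk⟩ : Fin k)))
    · intro p hp
      simp only [mem_coe, mem_filter] at hp
      obtain ⟨hpZ, ha, hb⟩ := hp
      simp only [mem_coe, cornerSW, mem_filter, mem_univ, true_and]
      intro i' j' hi hj
      simp only [Fin.le_def, Fin.val_mk] at hi hj
      have hmb := Nat.mod_eq_of_lt hb
      have ha2 := (p.1).isLt
      have hma : ((p.1:ℕ) - (n-k)) % k = (p.1:ℕ) - (n-k) := Nat.mod_eq_of_lt (by omega)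
      have hik := i'.isLt
      have hjk := j'.isLt
      exact forced_zero hF hkn' (hZmem p hpZ) (by omega) (by omega) (by omega) (by omega)
    · intro p hp q hq hfq
      simp only [mem_coe, mem_filter] at hp hq
      simp only [Prod.mk.injEq, Fin.mk.injEq] at hfq
      have := Nat.mod_eq_of_lt hp.2.2
      have := Nat.mod_eq_of_lt hq.2.2
      have hap := (p.1).isLt
      have haq := (q.1).isLt
      have : ((p.1:ℕ) - (n-k)) % k = (p.1:ℕ) - (n-k) := Nat.mod_eq_of_lt (by omega)
      have : ((q.1:ℕ) - (n-k)) % k = (q.1:ℕ) - (n-k) := Nat.mod_eq_of_lt (by omega)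
      have h2 : (p.2:ℕ) = q.2 := by omega
      have h1 : (p.1:ℕ) = q.1 := by
        have := hp.2.1; have := hq.2.1; omega
      exact Prod.ext (Fin.ext h1) (Fin.ext h2)
  have hSE : (Z.filter fun p => n - k ≤ (p.1:ℕ) ∧ n - k ≤ (p.2:ℕ)).card ≤ (cornerSE P).card := by
    apply card_le_card_of_injOn
      (fun p => ((⟨((p.1:ℕ) - (n-k)) % k, Nat.mod_lt _ hk⟩ : Fin k),
        (⟨((p.2:ℕ) - (n-k)) % k, Nat.mod_lt _ hk⟩ : Fin k)))
    · intro p hp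
      simp only [mem_coe, mem_filter] at hp
      obtain ⟨hpZ, ha, hb⟩ := hp
      simp only [mem_coe, cornerSE, mem_filter, mem_univ, true_and]
      intro i' j' hi hj
      simp only [Fin.le_def, Fin.val_mk] at hi hj
      have ha2 := (p.1).isLt
      have hb2 := (p.2).isLt
      have hma : ((p.1:ℕ) - (n-k)) % k = (p.1:ℕ) - (n-k) := Nat.mod_eq_of_lt (by omega)
      have hmb : ((p.2:ℕ) - (n-k)) % k = (p.2:ℕ) - (n-k) := Nat.mod_eq_of_lt (by omega)
      have hik := i'.isLt
      have hjk := j'.isLt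
      exact forced_zero hF hkn' (hZmem p hpZ) (by omega) (by omega) (by omega) (by omega)
    · intro p hp q hq hfq
      simp only [mem_coe, mem_filter] at hp hq
      simp only [Prod.mk.injEq, Fin.mk.injEq] at hfq
      have hap := (p.1).isLt
      have haq := (q.1).isLt
      have hbp := (p.2).isLt
      have hbq := (q.2).isLt
      have : ((p.1:ℕ) - (n-k)) % k = (p.1:ℕ) - (n-k) := Nat.mod_eq_of_lt (by omega)
      have : ((q.1:ℕ) - (n-k)) % k = (q.1:ℕ) - (n-k) := Nat.mod_eq_of_lt (by omega)
      have : ((p.2:ℕ) - (n-k)) % k = (p.2:ℕ) - (n-k) := Nat.mod_eq_of_lt (by omega)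
      have : ((q.2:ℕ) - (n-k)) % k = (q.2:ℕ) - (n-k) := Nat.mod_eq_of_lt (by omega)
      have h1 : (p.1:ℕ) = q.1 := by
        have := hp.2.1; have := hq.2.1; omega
      have h2 : (p.2:ℕ) = q.2 := by
        have := hp.2.2; have := hq.2.2; omega
      exact Prod.ext (Fin.ext h1) (Fin.ext h2)
  have hcard : Z.card ≤ (Z.filter fun p => (p.1:ℕ) < k ∧ (p.2:ℕ) < k).card
      + (Z.filter fun p => (p.1:ℕ) < k ∧ n - k ≤ (p.2:ℕ)).card
      + ((Z.filter fun p => n - k ≤ (p.1:ℕ) ∧ (p.2:ℕ) < k).card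
      + (Z.filter fun p => n - k ≤ (p.1:ℕ) ∧ n - k ≤ (p.2:ℕ)).card) :=
    (card_le_card hsub).trans ((card_union_le _ _).trans
      (Nat.add_le_add (card_union_le _ _) (card_union_le _ _)))
  have : zerosCount A = Z.card := rfl
  omega

end Aux3
section Aux4

open Finset

variable {k n : ℕ}

/-- The four embedded corner zero-sets. -/
def zeroSet (P : Fin k → Fin k → Bool) (hkn : 2 * k ≤ n) : Finset (Fin n × Fin n) :=
  ((cornerNW P).image (fun q => ((⟨q.1.1, by have := q.1.2; omega⟩ : Fin n),
      (⟨q.2.1, by have := q.2.2; omega⟩ : Fin n))) ∪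
   (cornerNE P).image (fun q => ((⟨q.1.1, by have := q.1.2; omega⟩ : Fin n),
      (⟨n - k + q.2.1, by have := q.2.2; omega⟩ : Fin n)))) ∪
  ((cornerSW P).image (fun q => ((⟨n - k + q.1.1, by have := q.1.2; omega⟩ : Fin n),
      (⟨q.2.1, by have := q.2.2; omega⟩ : Fin n))) ∪
   (cornerSE P).image (fun q => ((⟨n - k + q.1.1, by have := q.1.2; omega⟩ : Fin n),
      (⟨n - k + q.2.1, by have := q.2.2; omega⟩ : Fin n))))

def Amin (P : Fin k → Fin k → Bool) (hkn : 2 * k ≤ n) : Fin n → Fin n → Bool :=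
  fun a b => decide ((a, b) ∉ zeroSet P hkn)

lemma Amin_forcing (P : Fin k → Fin k → Bool) (hkn : 2 * k ≤ n) :
    IsForcing (Amin P hkn) P := by
  intro r c hr hc y x hyx
  have hkn' : k ≤ n := by omega
  rw [Amin, decide_eq_true_iff]
  intro hmem
  simp only [zeroSet, mem_union, mem_image] at hmem
  rcases hmem with (⟨q, hq, he⟩ | ⟨q, hq, he⟩) | (⟨q, hq, he⟩ | ⟨q, hq, he⟩)
  · simp only [Prod.mk.injEq] at he
    have h1 : ((r y : ℕ)) = q.1.1 := by rw [← he.1]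
    have h2 : ((c x : ℕ)) = q.2.1 := by rw [← he.2]
    simp only [cornerNW, mem_filter, mem_univ, true_and] at hq
    have := hq y x (Fin.le_def.mpr (by have := sm_le hr y; omega))
      (Fin.le_def.mpr (by have := sm_le hc x; omega))
    rw [hyx] at this; exact Bool.noConfusion this
  · simp only [Prod.mk.injEq] at he
    have h1 : ((r y : ℕ)) = q.1.1 := by rw [← he.1]
    have h2 : ((c x : ℕ)) = n - k + q.2.1 := by rw [← he.2]
    simp only [cornerNE, mem_filter, mem_univ, true_and] at hq
    have hcb := sm_ub hc hkn' x
    have := hq y x (Fin.le_def.mpr (by have := sm_le hr y; omega))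
      (Fin.le_def.mpr (by omega))
    rw [hyx] at this; exact Bool.noConfusion this
  · simp only [Prod.mk.injEq] at he
    have h1 : ((r y : ℕ)) = n - k + q.1.1 := by rw [← he.1]
    have h2 : ((c x : ℕ)) = q.2.1 := by rw [← he.2]
    simp only [cornerSW, mem_filter, mem_univ, true_and] at hq
    have hra := sm_ub hr hkn' y
    have := hq y x (Fin.le_def.mpr (by omega))
      (Fin.le_def.mpr (by have := sm_le hc x; omega))
    rw [hyx] at this; exact Bool.noConfusion this
  · simp only [Prod.mk.injEq] at he
    have h1 : ((r y : ℕ)) = n - k + q.1.1 := by rw [← he.1]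
    have h2 : ((c x : ℕ)) = n - k + q.2.1 := by rw [← he.2]
    simp only [cornerSE, mem_filter, mem_univ, true_and] at hq
    have hra := sm_ub hr hkn' y
    have hcb := sm_ub hc hkn' x
    have := hq y x (Fin.le_def.mpr (by omega)) (Fin.le_def.mpr (by omega))
    rw [hyx] at this; exact Bool.noConfusion this

end Aux4
section Aux5

open Finset

variable {k n : ℕ}

lemma ones_add_zeros {m' n' : ℕ} (A : Fin m' → Fin n' → Bool) :
    onesCount A + zerosCount A = m' * n' := by
  classical
  rw [onesCount, zerosCount]
  have h : (univ.filter (fun p : Fin m' × Fin n' => A p.1 p.2 = false)) =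
      (univ.filter (fun p : Fin m' × Fin n' => ¬ A p.1 p.2 = true)) := by
    apply filter_congr
    intro p _
    simp [Bool.not_eq_true]
  rw [h, Finset.card_filter_add_card_filter_not]
  simp [Finset.card_univ]

lemma card_zeroSet (P : Fin k → Fin k → Bool) (hk : 0 < k) (hkn : 2 * k ≤ n) :
    (zeroSet P hkn : Finset (Fin n × Fin n)).card =
      (cornerNW P).card + (cornerNE P).card + (cornerSW P).card + (cornerSE P).card := by
  classical
  have hknk : k ≤ n - k := by omega
  rw [zeroSet]
  rw [card_union_of_disjoint, card_union_of_disjoint, card_union_of_disjoint]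
  · rw [card_image_of_injective _ (fun q q' hqq => by
        simp only [Prod.mk.injEq, Fin.mk.injEq] at hqq
        exact Prod.ext (Fin.ext hqq.1) (Fin.ext hqq.2)),
      card_image_of_injective _ (fun q q' hqq => by
        simp only [Prod.mk.injEq, Fin.mk.injEq] at hqq
        exact Prod.ext (Fin.ext hqq.1) (Fin.ext (by omega))),
      card_image_of_injective _ (fun q q' hqq => by
        simp only [Prod.mk.injEq, Fin.mk.injEq] at hqq
        exact Prod.ext (Fin.ext (by omega)) (Fin.ext hqq.2)),
      card_image_of_injective _ (fun q q' hqq => by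
        simp only [Prod.mk.injEq, Fin.mk.injEq] at hqq
        exact Prod.ext (Fin.ext (by omega)) (Fin.ext (by omega)))]
    omega
  · -- SW vs SE : second coords differ
    refine disjoint_left.mpr ?_
    intro p hp hp'
    obtain ⟨q, hq, rfl⟩ := mem_image.mp hp
    obtain ⟨q', hq', he⟩ := mem_image.mp hp'
    have h := congrArg (fun z : Fin n × Fin n => ((z.1 : ℕ), (z.2 : ℕ))) he
    simp only [Prod.mk.injEq] at h
    have := q.2.2; have := q'.2.2
    omega
  · -- NW vs NE
    refine disjoint_left.mpr ?_
    intro p hp hp'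
    obtain ⟨q, hq, rfl⟩ := mem_image.mp hp
    obtain ⟨q', hq', he⟩ := mem_image.mp hp'
    have h := congrArg (fun z : Fin n × Fin n => ((z.1 : ℕ), (z.2 : ℕ))) he
    simp only [Prod.mk.injEq] at h
    have := q.2.2; have := q'.2.2
    omega
  · -- (NW ∪ NE) vs (SW ∪ SE) : first coords differ
    refine disjoint_left.mpr ?_
    intro p hp hp'
    rw [mem_union] at hp hp'
    have hlt : (p.1 : ℕ) < k := by
      rcases hp with hp | hp <;>
      · obtain ⟨q, hq, rfl⟩ := mem_image.mp hp
        have := q.1.2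
        simpa using this
    have hge : n - k ≤ (p.1 : ℕ) := by
      rcases hp' with hp' | hp' <;>
      · obtain ⟨q, hq, he⟩ := mem_image.mp hp'
        have h := congrArg (fun z : Fin n × Fin n => (z.1 : ℕ)) he
        simp only at h
        omega
    omega
lemma Amin_ones (P : Fin k → Fin k → Bool) (hk : 0 < k) (hkn : 2 * k ≤ n) :
    onesCount (Amin P hkn) ≤ n * n -
      ((cornerNW P).card + (cornerNE P).card + (cornerSW P).card + (cornerSE P).card) := by
  classical
  have hsub : zeroSet P hkn ⊆ univ.filter (fun p : Fin n × Fin n => Amin P hkn p.1 p.2 = false) := by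
    intro p hp
    simp only [mem_filter, mem_univ, true_and, Amin]
    simp only [decide_eq_false_iff_not, not_not]
    simpa using hp
  have h1 : (zeroSet P hkn).card ≤ zerosCount (Amin P hkn) := card_le_card hsub
  have h2 := ones_add_zeros (Amin P hkn)
  have h3 := card_zeroSet P hk hkn
  omega

end Aux5
section Aux6

open Finset

variable {k n : ℕ}

lemma mMin_eq {P : Fin k → Fin k → Bool} (hP : IsPermMatrix P) (hk : 0 < k)
    (hkn : 2 * k ≤ n) :
    mMin n n P = n * n -
      ((cornerNW P).card + (cornerNE P).card + (cornerSW P).card + (cornerSE P).card) := by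
  classical
  set c := (cornerNW P).card + (cornerNE P).card + (cornerSW P).card + (cornerSE P).card with hc
  set S : Set ℕ := {v | ∃ A : Fin n → Fin n → Bool, IsForcing A P ∧ onesCount A = v} with hS
  have hmem : onesCount (Amin P hkn) ∈ S := ⟨Amin P hkn, Amin_forcing P hkn, rfl⟩
  have hne : S.Nonempty := ⟨_, hmem⟩
  apply le_antisymm
  · exact (Nat.sInf_le hmem).trans (Amin_ones P hk hkn)
  · apply le_csInf hne
    rintro v ⟨A, hF, rfl⟩
    have h1 := zeros_le hP hF hk hkn
    have h2 := ones_add_zeros A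
    omega

end Aux6
section Aux7

open Finset

variable {k : ℕ}

lemma card_bound_helper {α : Type*} [DecidableEq α] (R C T : Finset α)
    (hR : R ⊆ T) (hC : C ⊆ T) (hRC : (R ∩ C).card ≤ 1) :
    R.card + C.card ≤ T.card + 1 := by
  have h1 := card_union_add_card_inter R C
  have h2 := card_le_card (union_subset hR hC)
  omega

lemma corner_lb {P : Fin k → Fin k → Bool} {σ : Equiv.Perm (Fin k)}
    (hσ : ∀ i j, P i j = decide (σ i = j)) (hk : 1 ≤ k) :
    4 * k ≤ (cornerNW P).card + (cornerNE P).card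
      + (cornerSW P).card + (cornerSE P).card + 8 := by
  classical
  set z : Fin k := ⟨0, by omega⟩ with hz
  set w : Fin k := ⟨k - 1, by omega⟩ with hw
  have hzv : (z : ℕ) = 0 := rfl
  have hwv : (w : ℕ) = k - 1 := rfl
  have hPf : ∀ i j : Fin k, σ i ≠ j → P i j = false := by
    intro i j hij; rw [hσ]; simp [hij]
  -- NW
  have hNW : (σ z : ℕ) + (σ.symm z : ℕ) ≤ (cornerNW P).card + 1 := by
    have hR : (Iio (σ z)).image (fun j => (z, j)) ⊆ cornerNW P := by
      intro p hp
      obtain ⟨j, hj, rfl⟩ := mem_image.mp hp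
      rw [mem_Iio] at hj
      simp only [cornerNW, mem_filter, mem_univ, true_and]
      intro i' j' hi' hj'
      have : i' = z := Fin.ext (by have h1 := Fin.le_def.mp hi'; rw [hzv] at h1; rw [hzv]; omega)
      subst this
      exact hPf _ _ (by intro hcon; rw [hcon] at hj; exact absurd (lt_of_le_of_lt hj' hj) (lt_irrefl _))
    have hC : (Iio (σ.symm z)).image (fun i => (i, z)) ⊆ cornerNW P := by
      intro p hp
      obtain ⟨i, hi, rfl⟩ := mem_image.mp hp
      rw [mem_Iio] at hi
      simp only [cornerNW, mem_filter, mem_univ, true_and]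
      intro i' j' hi' hj'
      have : j' = z := Fin.ext (by have h1 := Fin.le_def.mp hj'; rw [hzv] at h1; rw [hzv]; omega)
      subst this
      refine hPf _ _ (fun hcon => ?_)
      have : i' = σ.symm z := by rw [← hcon]; simp
      rw [this] at hi'
      exact absurd (lt_of_le_of_lt hi' hi) (lt_irrefl _)
    have hint : ((Iio (σ z)).image (fun j => (z, j)) ∩
        (Iio (σ.symm z)).image (fun i => (i, z))).card ≤ 1 := by
      refine (card_le_card (fun p hp => ?_)).trans (card_singleton (z, z)).le
      rw [mem_inter] at hp
      obtain ⟨j, _, rfl⟩ := mem_image.mp hp.1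
      obtain ⟨i, _, he⟩ := mem_image.mp hp.2
      rw [mem_singleton]
      rw [Prod.mk.injEq] at he ⊢
      exact ⟨rfl, he.2.symm ▸ rfl⟩
    have := card_bound_helper _ _ _ hR hC hint
    rwa [card_image_of_injective _ (fun a b hab => by simpa [Prod.ext_iff] using hab),
      card_image_of_injective _ (fun a b hab => by simpa [Prod.ext_iff] using hab),
      Fin.card_Iio, Fin.card_Iio] at this
  -- NE
  have hNE : (k - 1 - (σ z : ℕ)) + (σ.symm w : ℕ) ≤ (cornerNE P).card + 1 := by
    have hR : (Ioi (σ z)).image (fun j => (z, j)) ⊆ cornerNE P := by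
      intro p hp
      obtain ⟨j, hj, rfl⟩ := mem_image.mp hp
      rw [mem_Ioi] at hj
      simp only [cornerNE, mem_filter, mem_univ, true_and]
      intro i' j' hi' hj'
      have : i' = z := Fin.ext (by have h1 := Fin.le_def.mp hi'; rw [hzv] at h1; rw [hzv]; omega)
      subst this
      exact hPf _ _ (by intro hcon; rw [hcon] at hj; exact absurd (lt_of_lt_of_le hj hj') (lt_irrefl _))
    have hC : (Iio (σ.symm w)).image (fun i => (i, w)) ⊆ cornerNE P := by
      intro p hp
      obtain ⟨i, hi, rfl⟩ := mem_image.mp hp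
      rw [mem_Iio] at hi
      simp only [cornerNE, mem_filter, mem_univ, true_and]
      intro i' j' hi' hj'
      have : j' = w := Fin.ext (by
        have h1 := Fin.le_def.mp hj'; have h2 := j'.isLt; rw [hwv] at h1; rw [hwv]; omega)
      subst this
      refine hPf _ _ (fun hcon => ?_)
      have : i' = σ.symm w := by rw [← hcon]; simp
      rw [this] at hi'
      exact absurd (lt_of_le_of_lt hi' hi) (lt_irrefl _)
    have hint : ((Ioi (σ z)).image (fun j => (z, j)) ∩
        (Iio (σ.symm w)).image (fun i => (i, w))).card ≤ 1 := by
      refine (card_le_card (fun p hp => ?_)).trans (card_singleton (z, w)).le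
      rw [mem_inter] at hp
      obtain ⟨j, _, rfl⟩ := mem_image.mp hp.1
      obtain ⟨i, _, he⟩ := mem_image.mp hp.2
      rw [mem_singleton]
      rw [Prod.mk.injEq] at he ⊢
      exact ⟨rfl, he.2.symm ▸ rfl⟩
    have := card_bound_helper _ _ _ hR hC hint
    rwa [card_image_of_injective _ (fun a b hab => by simpa [Prod.ext_iff] using hab),
      card_image_of_injective _ (fun a b hab => by simpa [Prod.ext_iff] using hab),
      Fin.card_Ioi, Fin.card_Iio] at this
  -- SW
  have hSW : (σ w : ℕ) + (k - 1 - (σ.symm z : ℕ)) ≤ (cornerSW P).card + 1 := by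
    have hR : (Iio (σ w)).image (fun j => (w, j)) ⊆ cornerSW P := by
      intro p hp
      obtain ⟨j, hj, rfl⟩ := mem_image.mp hp
      rw [mem_Iio] at hj
      simp only [cornerSW, mem_filter, mem_univ, true_and]
      intro i' j' hi' hj'
      have : i' = w := Fin.ext (by
        have h1 := Fin.le_def.mp hi'; have h2 := i'.isLt; rw [hwv] at h1; rw [hwv]; omega)
      subst this
      exact hPf _ _ (by intro hcon; rw [hcon] at hj; exact absurd (lt_of_le_of_lt hj' hj) (lt_irrefl _))
    have hC : (Ioi (σ.symm z)).image (fun i => (i, z)) ⊆ cornerSW P := by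
      intro p hp
      obtain ⟨i, hi, rfl⟩ := mem_image.mp hp
      rw [mem_Ioi] at hi
      simp only [cornerSW, mem_filter, mem_univ, true_and]
      intro i' j' hi' hj'
      have : j' = z := Fin.ext (by have h1 := Fin.le_def.mp hj'; rw [hzv] at h1; rw [hzv]; omega)
      subst this
      refine hPf _ _ (fun hcon => ?_)
      have : i' = σ.symm z := by rw [← hcon]; simp
      rw [this] at hi'
      exact absurd (lt_of_lt_of_le hi hi') (lt_irrefl _)
    have hint : ((Iio (σ w)).image (fun j => (w, j)) ∩
        (Ioi (σ.symm z)).image (fun i => (i, z))).card ≤ 1 := by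
      refine (card_le_card (fun p hp => ?_)).trans (card_singleton (w, z)).le
      rw [mem_inter] at hp
      obtain ⟨j, _, rfl⟩ := mem_image.mp hp.1
      obtain ⟨i, _, he⟩ := mem_image.mp hp.2
      rw [mem_singleton]
      rw [Prod.mk.injEq] at he ⊢
      exact ⟨rfl, he.2.symm ▸ rfl⟩
    have := card_bound_helper _ _ _ hR hC hint
    rwa [card_image_of_injective _ (fun a b hab => by simpa [Prod.ext_iff] using hab),
      card_image_of_injective _ (fun a b hab => by simpa [Prod.ext_iff] using hab),
      Fin.card_Iio, Fin.card_Ioi] at this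
  -- SE
  have hSE : (k - 1 - (σ w : ℕ)) + (k - 1 - (σ.symm w : ℕ)) ≤ (cornerSE P).card + 1 := by
    have hR : (Ioi (σ w)).image (fun j => (w, j)) ⊆ cornerSE P := by
      intro p hp
      obtain ⟨j, hj, rfl⟩ := mem_image.mp hp
      rw [mem_Ioi] at hj
      simp only [cornerSE, mem_filter, mem_univ, true_and]
      intro i' j' hi' hj'
      have : i' = w := Fin.ext (by
        have h1 := Fin.le_def.mp hi'; have h2 := i'.isLt; rw [hwv] at h1; rw [hwv]; omega)
      subst this
      exact hPf _ _ (by intro hcon; rw [hcon] at hj; exact absurd (lt_of_lt_of_le hj hj') (lt_irrefl _))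
    have hC : (Ioi (σ.symm w)).image (fun i => (i, w)) ⊆ cornerSE P := by
      intro p hp
      obtain ⟨i, hi, rfl⟩ := mem_image.mp hp
      rw [mem_Ioi] at hi
      simp only [cornerSE, mem_filter, mem_univ, true_and]
      intro i' j' hi' hj'
      have : j' = w := Fin.ext (by
        have h1 := Fin.le_def.mp hj'; have h2 := j'.isLt; rw [hwv] at h1; rw [hwv]; omega)
      subst this
      refine hPf _ _ (fun hcon => ?_)
      have : i' = σ.symm w := by rw [← hcon]; simp
      rw [this] at hi'
      exact absurd (lt_of_lt_of_le hi hi') (lt_irrefl _)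
    have hint : ((Ioi (σ w)).image (fun j => (w, j)) ∩
        (Ioi (σ.symm w)).image (fun i => (i, w))).card ≤ 1 := by
      refine (card_le_card (fun p hp => ?_)).trans (card_singleton (w, w)).le
      rw [mem_inter] at hp
      obtain ⟨j, _, rfl⟩ := mem_image.mp hp.1
      obtain ⟨i, _, he⟩ := mem_image.mp hp.2
      rw [mem_singleton]
      rw [Prod.mk.injEq] at he ⊢
      exact ⟨rfl, he.2.symm ▸ rfl⟩
    have := card_bound_helper _ _ _ hR hC hint
    rwa [card_image_of_injective _ (fun a b hab => by simpa [Prod.ext_iff] using hab),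
      card_image_of_injective _ (fun a b hab => by simpa [Prod.ext_iff] using hab),
      Fin.card_Ioi, Fin.card_Ioi] at this
  have b1 := (σ z).isLt
  have b2 := (σ w).isLt
  have b3 := (σ.symm z).isLt
  have b4 := (σ.symm w).isLt
  rw [hzv] at *
  rw [hwv] at *
  omega

end Aux7
section Aux8

open Finset

def fv (k v : ℕ) : ℕ :=
  if v = 0 then 1 else if v = 1 then k - 1 else if v = k - 2 then 0
  else if v = k - 1 then k - 2 else v

variable {k : ℕ}

lemma fv_lt (hk : 4 ≤ k) {v : ℕ} (hv : v < k) : fv k v < k := by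
  unfold fv; split_ifs <;> omega

def f0 (hk : 4 ≤ k) : Fin k → Fin k := fun i => ⟨fv k i.1, fv_lt hk i.2⟩

lemma f0_inj (hk : 4 ≤ k) : Function.Injective (f0 hk) := by
  intro a b hab
  have h := congrArg Fin.val hab
  simp only [f0] at h
  have ha := a.isLt; have hb := b.isLt
  apply Fin.ext
  unfold fv at h
  split_ifs at h <;> omega

noncomputable def sigma0 (hk : 4 ≤ k) : Equiv.Perm (Fin k) :=
  Equiv.ofBijective (f0 hk) (Finite.injective_iff_bijective.mp (f0_inj hk))

noncomputable def P0 (hk : 4 ≤ k) : Fin k → Fin k → Bool :=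
  fun i j => decide (sigma0 hk i = j)

lemma P0_perm (hk : 4 ≤ k) : IsPermMatrix (P0 hk) := ⟨sigma0 hk, fun _ _ => rfl⟩

lemma P0_false_iff (hk : 4 ≤ k) (i j : Fin k) :
    P0 hk i j = false ↔ fv k (i:ℕ) ≠ (j:ℕ) := by
  have : sigma0 hk i = f0 hk i := rfl
  rw [P0, this, decide_eq_false_iff_not]
  constructor
  · intro h hc; exact h (Fin.ext hc)
  · intro h hc; exact h (congrArg Fin.val hc)

lemma P0_true (hk : 4 ≤ k) (i j : Fin k) (h : fv k (i:ℕ) = (j:ℕ)) :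
    P0 hk i j = true := by
  have : sigma0 hk i = f0 hk i := rfl
  rw [P0, this, decide_eq_true_iff]
  exact Fin.ext h

lemma cornerNW_P0 (hk : 4 ≤ k) :
    cornerNW (P0 hk) = (Iio (⟨k-2, by omega⟩ : Fin k)).image
      (fun i => (i, (⟨0, by omega⟩ : Fin k))) := by
  ext ⟨i, j⟩
  simp only [cornerNW, mem_filter, mem_univ, true_and, mem_image, mem_Iio]
  constructor
  · intro h
    have hj : (j:ℕ) = 0 := by
      by_contra hj
      have := h ⟨0, by omega⟩ ⟨1, by omega⟩ (Fin.le_def.mpr (by simp only [Fin.val_mk]; omega))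
        (Fin.le_def.mpr (by simp only [Fin.val_mk]; omega))
      rw [P0_false_iff hk] at this
      exact this (show fv k 0 = 1 by unfold fv; simp)
    have hi : (i:ℕ) < k - 2 := by
      by_contra hi
      have hik := i.isLt
      have := h ⟨k-2, by omega⟩ ⟨0, by omega⟩ (Fin.le_def.mpr (by simp only [Fin.val_mk]; omega))
        (Fin.le_def.mpr (by simp only [Fin.val_mk]; omega))
      rw [P0_false_iff hk] at this
      exact this (show fv k (k-2) = 0 by unfold fv; split_ifs <;> omega)
    exact ⟨i, by rw [Fin.lt_def]; exact hi, by
      rw [Prod.mk.injEq]; exact ⟨rfl, Fin.ext hj.symm⟩⟩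
  · rintro ⟨i', hi', he⟩
    rw [Prod.mk.injEq] at he
    obtain ⟨rfl, rfl⟩ := he
    rw [Fin.lt_def] at hi'
    simp only [Fin.val_mk] at hi'
    intro a b ha hb
    rw [Fin.le_def] at ha hb
    rw [P0_false_iff hk]
    have hbk : (b:ℕ) = 0 := by simp only [Fin.val_mk] at hb; omega
    rw [hbk]
    have hak : (a:ℕ) < k - 2 := by omega
    unfold fv; split_ifs <;> omega

lemma cornerNE_P0 (hk : 4 ≤ k) :
    cornerNE (P0 hk) = (Ioi (⟨1, by omega⟩ : Fin k)).image
      (fun j => ((⟨0, by omega⟩ : Fin k), j)) := by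
  ext ⟨i, j⟩
  simp only [cornerNE, mem_filter, mem_univ, true_and, mem_image, mem_Ioi]
  constructor
  · intro h
    have hi : (i:ℕ) = 0 := by
      by_contra hi
      have hjk := j.isLt
      have := h ⟨1, by omega⟩ ⟨k-1, by omega⟩ (Fin.le_def.mpr (by simp only [Fin.val_mk]; omega))
        (Fin.le_def.mpr (by simp only [Fin.val_mk]; omega))
      rw [P0_false_iff hk] at this
      exact this (show fv k 1 = k - 1 by simp only [fv]; norm_num)
    have hj : 1 < (j:ℕ) := by
      by_contra hj
      have hjk := j.isLt
      have := h ⟨0, by omega⟩ ⟨1, by omega⟩ (Fin.le_def.mpr (by simp only [Fin.val_mk]; omega))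
        (Fin.le_def.mpr (by simp only [Fin.val_mk]; omega))
      rw [P0_false_iff hk] at this
      exact this (show fv k 0 = 1 by unfold fv; simp)
    exact ⟨j, by rw [Fin.lt_def]; exact hj, by
      rw [Prod.mk.injEq]; exact ⟨Fin.ext hi.symm, rfl⟩⟩
  · rintro ⟨j', hj', he⟩
    rw [Prod.mk.injEq] at he
    obtain ⟨rfl, rfl⟩ := he
    rw [Fin.lt_def] at hj'
    simp only [Fin.val_mk] at hj'
    intro a b ha hb
    rw [Fin.le_def] at ha hb
    rw [P0_false_iff hk]
    have hak : (a:ℕ) = 0 := by simp only [Fin.val_mk] at ha; omega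
    rw [hak]
    have hbk := b.isLt
    unfold fv; split_ifs <;> omega

lemma cornerSW_P0 (hk : 4 ≤ k) :
    cornerSW (P0 hk) = (Iio (⟨k-2, by omega⟩ : Fin k)).image
      (fun j => ((⟨k-1, by omega⟩ : Fin k), j)) := by
  ext ⟨i, j⟩
  simp only [cornerSW, mem_filter, mem_univ, true_and, mem_image, mem_Iio]
  constructor
  · intro h
    have hik := i.isLt
    have hjk := j.isLt
    have hi : (i:ℕ) = k - 1 := by
      by_contra hi
      have := h ⟨k-2, by omega⟩ ⟨0, by omega⟩ (Fin.le_def.mpr (by simp only [Fin.val_mk]; omega))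
        (Fin.le_def.mpr (by simp only [Fin.val_mk]; omega))
      rw [P0_false_iff hk] at this
      exact this (show fv k (k-2) = 0 by unfold fv; split_ifs <;> omega)
    have hj : (j:ℕ) < k - 2 := by
      by_contra hj
      have := h ⟨k-1, by omega⟩ ⟨k-2, by omega⟩ (Fin.le_def.mpr (by simp only [Fin.val_mk]; omega))
        (Fin.le_def.mpr (by simp only [Fin.val_mk]; omega))
      rw [P0_false_iff hk] at this
      exact this (show fv k (k-1) = k - 2 by unfold fv; split_ifs <;> omega)
    exact ⟨j, by rw [Fin.lt_def]; exact hj, by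
      rw [Prod.mk.injEq]; exact ⟨Fin.ext hi.symm, rfl⟩⟩
  · rintro ⟨j', hj', he⟩
    rw [Prod.mk.injEq] at he
    obtain ⟨rfl, rfl⟩ := he
    rw [Fin.lt_def] at hj'
    simp only [Fin.val_mk] at hj'
    intro a b ha hb
    rw [Fin.le_def] at ha hb
    rw [P0_false_iff hk]
    have hak := a.isLt
    have hai : (a:ℕ) = k - 1 := by simp only [Fin.val_mk] at ha; omega
    rw [hai]
    unfold fv; split_ifs <;> omega

lemma cornerSE_P0 (hk : 4 ≤ k) :
    cornerSE (P0 hk) = (Ioi (⟨1, by omega⟩ : Fin k)).image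
      (fun i => (i, (⟨k-1, by omega⟩ : Fin k))) := by
  ext ⟨i, j⟩
  simp only [cornerSE, mem_filter, mem_univ, true_and, mem_image, mem_Ioi]
  constructor
  · intro h
    have hik := i.isLt
    have hjk := j.isLt
    have hj : (j:ℕ) = k - 1 := by
      by_contra hj
      have := h ⟨k-1, by omega⟩ ⟨k-2, by omega⟩ (Fin.le_def.mpr (by simp only [Fin.val_mk]; omega))
        (Fin.le_def.mpr (by simp only [Fin.val_mk]; omega))
      rw [P0_false_iff hk] at this
      exact this (show fv k (k-1) = k - 2 by unfold fv; split_ifs <;> omega)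
    have hi : 1 < (i:ℕ) := by
      by_contra hi
      have := h ⟨1, by omega⟩ ⟨k-1, by omega⟩ (Fin.le_def.mpr (by simp only [Fin.val_mk]; omega))
        (Fin.le_def.mpr (by simp only [Fin.val_mk]; omega))
      rw [P0_false_iff hk] at this
      exact this (show fv k 1 = k - 1 by simp only [fv]; norm_num)
    exact ⟨i, by rw [Fin.lt_def]; exact hi, by
      rw [Prod.mk.injEq]; exact ⟨rfl, Fin.ext hj.symm⟩⟩
  · rintro ⟨i', hi', he⟩
    rw [Prod.mk.injEq] at he
    obtain ⟨rfl, rfl⟩ := he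
    rw [Fin.lt_def] at hi'
    simp only [Fin.val_mk] at hi'
    intro a b ha hb
    rw [Fin.le_def] at ha hb
    rw [P0_false_iff hk]
    have hbk := b.isLt
    have hbi : (b:ℕ) = k - 1 := by simp only [Fin.val_mk] at hb; omega
    rw [hbi]
    have hak := a.isLt
    unfold fv; split_ifs <;> omega

lemma corner_sum_P0 (hk : 4 ≤ k) :
    (cornerNW (P0 hk)).card + (cornerNE (P0 hk)).card
      + (cornerSW (P0 hk)).card + (cornerSE (P0 hk)).card = 4 * k - 8 := by
  rw [cornerNW_P0 hk, cornerNE_P0 hk, cornerSW_P0 hk, cornerSE_P0 hk]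
  rw [card_image_of_injective _ (fun a b hab => by simpa [Prod.ext_iff] using hab),
    card_image_of_injective _ (fun a b hab => by simpa [Prod.ext_iff] using hab),
    card_image_of_injective _ (fun a b hab => by simpa [Prod.ext_iff] using hab),
    card_image_of_injective _ (fun a b hab => by simpa [Prod.ext_iff] using hab),
    Fin.card_Iio, Fin.card_Ioi]
  simp only [Fin.val_mk]
  omega

end Aux8

theorem stmt10 (k n : ℕ) (hk : 4 ≤ k) (hn : 2 * k ≤ n) :
    IsGreatest {v | ∃ P : Fin k → Fin k → Bool, IsPermMatrix P ∧ mMin n n P = v}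
      (n ^ 2 - 4 * k + 8) := by
  have hsq : n ^ 2 = n * n := by ring
  have hnn : 2 * k * (2 * k) ≤ n * n := Nat.mul_le_mul hn hn
  have h4 : 4 * k + 8 ≤ 2 * k * (2 * k) := by nlinarith
  constructor
  · refine ⟨P0 hk, P0_perm hk, ?_⟩
    rw [mMin_eq (P0_perm hk) (by omega) hn]
    have := corner_sum_P0 hk
    omega
  · rintro v ⟨P, hPperm, rfl⟩
    have hP2 := hPperm
    obtain ⟨σ, hσ⟩ := hP2
    have hlb := corner_lb hσ (by omega)
    rw [mMin_eq hPperm (by omega) hn]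
    omega
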